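/- (Kernel bound, rule R3) Let G=(V,E) be a graph on n vertices, π a 2-partition of V, and K,t,f nonnegative integers with t+2f < n. Suppose c_π(v) ≤ t+f for all v∈V, and let U = {v∈V : c_π(v) ≥ n−t−f}. If there exists a (K,t)-feasible flipping set F ⊆ U for π with |F| = f, then |U| ≤ K/(n−t−2f) − f. -/
import Mathlib


open Finset

variable {V : Type*} [Fintype V] [DecidableEq V]

/-- A 2-partition of the vertex set is given by an indicator `π : V → Bool`
(the two clusters are the preimages of `true` and `false`).
Two vertices `u ≠ v` are in conflict if they are in the same cluster but not adjacent,
or in different clusters but adjacent. -/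
def Conflict (G : SimpleGraph V) (π : V → Bool) (u v : V) : Prop :=
  u ≠ v ∧ ((π u = π v) ↔ ¬ G.Adj u v)

instance (G : SimpleGraph V) [DecidableRel G.Adj] (π : V → Bool) (u v : V) :
    Decidable (Conflict G π u v) := by
  unfold Conflict; infer_instance

/-- `C_π(v)` : the set of vertices in conflict with `v`. -/
def conflictSet (G : SimpleGraph V) [DecidableRel G.Adj] (π : V → Bool) (v : V) : Finset V :=
  Finset.univ.filter (fun u => Conflict G π v u)

/-- `c_π(v)` : the conflict number of `v`. -/
def cNum (G : SimpleGraph V) [DecidableRel G.Adj] (π : V → Bool) (v : V) : ℕ :=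
  (conflictSet G π v).card

/-- Flipping the set `F` : moving every vertex of `F` to the other cluster. -/
def flipSet (π : V → Bool) (F : Finset V) : V → Bool :=
  fun v => if v ∈ F then !(π v) else π v

/-- `h₁(π)` : the total conflict number. -/
def h1 (G : SimpleGraph V) [DecidableRel G.Adj] (π : V → Bool) : ℕ :=
  ∑ v, cNum G π v

/-- `h₂(π)` : the sum of squared conflict numbers. -/
def h2 (G : SimpleGraph V) [DecidableRel G.Adj] (π : V → Bool) : ℕ :=
  ∑ v, (cNum G π v) ^ 2

/-- Lemma 4, kernel bound for rule R3: suppose `t + 2f < n` and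
`c_π(v) ≤ t + f` for all `v`. If there exists a `(K,t)`-feasible flipping set `F ⊆ U`
of size exactly `f`, where `U = {v : c_π(v) ≥ n − t − f}`, then
`|U| ≤ K/(n − t − 2f) − f`. -/
theorem rule_R3_kernel_bound (G : SimpleGraph V) [DecidableRel G.Adj] (π : V → Bool)
    (K t f : ℕ) (hn : t + 2 * f < Fintype.card V)
    (hall : ∀ v : V, cNum G π v ≤ t + f)
    (U : Finset V)
    (hU : U = Finset.univ.filter
      (fun v => (Fintype.card V : ℤ) - t - f ≤ (cNum G π v : ℤ)))
    (F : Finset V) (hFU : F ⊆ U) (hFcard : F.card = f)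
    (hfeas : h1 G (flipSet π F) ≤ K ∧ ∀ v : V, cNum G (flipSet π F) v ≤ t) :
    (U.card : ℝ) ≤ (K : ℝ) / ((Fintype.card V : ℝ) - t - 2 * f) - f := by
  obtain ⟨hK, hfe⟩ := hfeas
  have hbool : ∀ x y : Bool, ((!x) = y) ↔ ¬(x = y) := by decide
  have hnF : ∀ u, u ∉ F → flipSet π F u = π u := fun u hu => if_neg hu
  have hFm : ∀ u, u ∈ F → flipSet π F u = !(π u) := fun u hu => if_pos hu
  set d : ℕ := Fintype.card V - (t + 2 * f) with hd
  -- symmetry of conflicts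
  have csym : ∀ u w : V, Conflict G (flipSet π F) u w ↔ Conflict G (flipSet π F) w u := by
    intro u w
    constructor <;> rintro ⟨h1, h2⟩ <;>
      exact ⟨h1.symm, by rw [eq_comm, G.adj_comm]; exact h2⟩
  -- Claim A
  have claimA : ∀ u ∈ U \ F,
      d ≤ (Fᶜ.filter (fun w => Conflict G (flipSet π F) u w)).card := by
    intro u hu
    obtain ⟨huU, huF⟩ := Finset.mem_sdiff.mp hu
    have h1' : (Fintype.card V : ℤ) - t - f ≤ (cNum G π u : ℤ) := by
      rw [hU] at huU
      exact (Finset.mem_filter.mp huU).2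
    have hsub : (conflictSet G π u).filter (fun w => ¬ w ∈ F) ⊆
        Fᶜ.filter (fun w => Conflict G (flipSet π F) u w) := by
      intro w hw
      obtain ⟨hw1, hw2⟩ := Finset.mem_filter.mp hw
      obtain ⟨hne, hiff⟩ : Conflict G π u w := (Finset.mem_filter.mp hw1).2
      refine Finset.mem_filter.mpr ⟨Finset.mem_compl.mpr hw2, hne, ?_⟩
      rw [hnF u huF, hnF w hw2]; exact hiff
    have hsplit := Finset.card_filter_add_card_filter_not
      (s := conflictSet G π u) (p := fun w => w ∈ F)
    have hle : ((conflictSet G π u).filter (fun w => w ∈ F)).card ≤ f := by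
      rw [← hFcard]
      refine Finset.card_le_card fun w hw => ?_
      exact (Finset.mem_filter.mp hw).2
    have hc := Finset.card_le_card hsub
    have : cNum G π u = (conflictSet G π u).card := rfl
    omega
  -- Claim B
  have claimB : ∀ v ∈ F,
      d ≤ (Fᶜ.filter (fun w => Conflict G (flipSet π F) v w)).card := by
    intro v hv
    have hcover : (univ : Finset V) ⊆
        F ∪ conflictSet G π v ∪ Fᶜ.filter (fun w => Conflict G (flipSet π F) v w) := by
      intro w _
      by_cases hwF : w ∈ F
      · simp [hwF]
      by_cases hwc : Conflict G π v w
      · simp [conflictSet, hwc]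
      · refine Finset.mem_union_right _
          (Finset.mem_filter.mpr ⟨Finset.mem_compl.mpr hwF, ?_⟩)
        have hne : v ≠ w := fun h => hwF (h ▸ hv)
        refine ⟨hne, ?_⟩
        rw [hFm v hv, hnF w hwF, hbool]
        have hnc : ¬((π v = π w) ↔ ¬ G.Adj v w) := fun h => hwc ⟨hne, h⟩
        tauto
    have hcard := Finset.card_le_card hcover
    have h3 := Finset.card_union_le (F ∪ conflictSet G π v)
      (Fᶜ.filter (fun w => Conflict G (flipSet π F) v w))
    have h4 := Finset.card_union_le F (conflictSet G π v)
    have h5 := hall v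
    have : cNum G π v = (conflictSet G π v).card := rfl
    have hcu : (univ : Finset V).card = Fintype.card V := Finset.card_univ
    omega
  -- Claim C : double counting
  have claimC : ∑ v ∈ F, (Fᶜ.filter (fun w => Conflict G (flipSet π F) v w)).card
      = ∑ u ∈ Fᶜ, (F.filter (fun w => Conflict G (flipSet π F) u w)).card := by
    simp only [Finset.card_filter]
    rw [Finset.sum_comm]
    refine Finset.sum_congr rfl fun u _ => Finset.sum_congr rfl fun v _ => ?_
    exact if_congr (csym v u) rfl rfl
  -- Splitting cNum
  have hsplit : ∀ u, cNum G (flipSet π F) u =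
      (Fᶜ.filter (fun w => Conflict G (flipSet π F) u w)).card
      + (F.filter (fun w => Conflict G (flipSet π F) u w)).card := by
    intro u
    rw [cNum, conflictSet,
      ← Finset.card_union_of_disjoint
        (Finset.disjoint_filter_filter disjoint_compl_left)]
    congr 1
    ext w
    simp only [Finset.mem_filter, Finset.mem_union, Finset.mem_compl, Finset.mem_univ,
      true_and]
    tauto
  -- assemble
  have hfU : f ≤ U.card := hFcard ▸ Finset.card_le_card hFU
  have hUF : (U \ F).card = U.card - f := by rw [Finset.card_sdiff_of_subset hFU, hFcard]
  have hA : (U.card - f) * d ≤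
      ∑ u ∈ Fᶜ, (Fᶜ.filter (fun w => Conflict G (flipSet π F) u w)).card := by
    have hsub : U \ F ⊆ Fᶜ := fun x hx =>
      Finset.mem_compl.mpr (Finset.mem_sdiff.mp hx).2
    calc (U.card - f) * d = ∑ _u ∈ U \ F, d := by
          rw [Finset.sum_const, smul_eq_mul, hUF]
      _ ≤ ∑ u ∈ U \ F, (Fᶜ.filter (fun w => Conflict G (flipSet π F) u w)).card :=
          Finset.sum_le_sum claimA
      _ ≤ _ := Finset.sum_le_sum_of_subset hsub
  have hB : f * d ≤ ∑ v ∈ F, (Fᶜ.filter (fun w => Conflict G (flipSet π F) v w)).card := by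
    calc f * d = ∑ _v ∈ F, d := by rw [Finset.sum_const, smul_eq_mul, hFcard]
      _ ≤ _ := Finset.sum_le_sum claimB
  have hh1 : h1 G (flipSet π F) =
      (∑ u ∈ Fᶜ, (Fᶜ.filter (fun w => Conflict G (flipSet π F) u w)).card
        + ∑ u ∈ Fᶜ, (F.filter (fun w => Conflict G (flipSet π F) u w)).card)
      + (∑ v ∈ F, (Fᶜ.filter (fun w => Conflict G (flipSet π F) v w)).card
        + ∑ v ∈ F, (F.filter (fun w => Conflict G (flipSet π F) v w)).card) := by
    rw [h1, ← Finset.sum_compl_add_sum F]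
    simp only [hsplit]
    rw [Finset.sum_add_distrib, Finset.sum_add_distrib]
  have hsum : (U.card + f) * d ≤ K := by
    have key : (U.card + f) * d = (U.card - f) * d + f * d + f * d := by
      have h : U.card + f = (U.card - f) + f + f := by omega
      rw [h, Nat.add_mul, Nat.add_mul]
    rw [key]
    have hB' : f * d ≤ ∑ u ∈ Fᶜ, (F.filter (fun w => Conflict G (flipSet π F) u w)).card :=
      claimC ▸ hB
    have := hK
    rw [hh1] at this
    omega
  -- real arithmetic
  have hdR : ((Fintype.card V : ℝ) - t - 2 * f) = (d : ℝ) := by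
    rw [hd]
    push_cast [Nat.cast_sub (le_of_lt hn)]
    ring
  have hdpos : (0 : ℝ) < (d : ℝ) := by
    have : 0 < d := by omega
    exact_mod_cast this
  rw [hdR, le_sub_iff_add_le, le_div_iff₀ hdpos]
  exact_mod_cast hsum
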